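/- Let C be a category with all morphisms monic satisfying: countable cofinality, relative countable cofinality (for every object X there is a sequence of morphisms X → X(m), m ≥ 1, cofinal among morphisms out of X), the joint embedding property, and the amalgamation property (any span X ← W → Y completes to a commutative square with some object Z). Then C has an ind-object that is both universal and f-injective (hence universal and homogeneous). -/

import Mathlib

open CategoryTheory

universe u v

/-- An ind-object of a category `C`: a sequential diagram `X₁ → X₂ → ⋯` in `C`. -/
structure IndObject (C : Type u) [Category.{v} C] where
  obj : ℕ → C
  map : ∀ n : ℕ, obj n ⟶ obj (n + 1)

namespace IndObject

variable {C : Type u} [Category.{v} C]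

/-- The transition morphism `obj n ⟶ obj m` of an ind-object, for `n ≤ m`. -/
def trans (Ω : IndObject C) : ∀ {n m : ℕ}, n ≤ m → (Ω.obj n ⟶ Ω.obj m) :=
  fun {n m} h =>
    Nat.leRecOn (C := fun m => Ω.obj n ⟶ Ω.obj m) h (fun {l} g => g ≫ Ω.map l) (𝟙 _)

/-- An ind-object is universal if every object of `C` embeds into it. -/
def Universal (Ω : IndObject C) : Prop :=
  ∀ X : C, ∃ n : ℕ, Nonempty (X ⟶ Ω.obj n)

/-- An ind-object is f-injective if every embedding of an object of `C` into it extends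
along any morphism of `C`. -/
def FInjective (Ω : IndObject C) : Prop :=
  ∀ ⦃X Y : C⦄ (α : X ⟶ Y) (n : ℕ) (γ : X ⟶ Ω.obj n),
    ∃ (m : ℕ) (h : n ≤ m) (β : Y ⟶ Ω.obj m), α ≫ β = γ ≫ Ω.trans h

end IndObject

namespace FraisseAux

open IndObject

variable {C : Type u} [Category.{v} C]

lemma trans_refl (Ω : IndObject C) {n : ℕ} (h : n ≤ n) : Ω.trans h = 𝟙 _ :=
  Nat.leRecOn_self _

lemma trans_succ (Ω : IndObject C) {n k : ℕ} (h : n ≤ k) (h' : n ≤ k + 1) :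
    Ω.trans h' = Ω.trans h ≫ Ω.map k :=
  Nat.leRecOn_succ h _

/-- All the data obtained by choice from the hypotheses. -/
structure FData (C : Type u) [Category.{v} C] where
  U : ℕ → C
  Fam : C → ℕ → C
  ffam : ∀ (X : C) (m : ℕ), X ⟶ Fam X m
  AZ : ∀ (W X Y : C), (W ⟶ X) → (W ⟶ Y) → C
  Ah : ∀ (W X Y : C) (f : W ⟶ X) (g : W ⟶ Y), X ⟶ AZ W X Y f g
  Ai : ∀ (W X Y : C) (f : W ⟶ X) (g : W ⟶ Y), Y ⟶ AZ W X Y f g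
  hA : ∀ (W X Y : C) (f : W ⟶ X) (g : W ⟶ Y), f ≫ Ah W X Y f g = g ≫ Ai W X Y f g
  JZ : C → C → C
  j1 : ∀ X Y : C, X ⟶ JZ X Y
  j2 : ∀ X Y : C, Y ⟶ JZ X Y

/-- The state: a current object together with a countable family of pending tasks,
each a morphism out of the current object. -/
abbrev FSt (C : Type u) [Category.{v} C] := Σ' X : C, ∀ _ : ℕ, Σ' B : C, X ⟶ B

/-- One construction step: resolve task `k` by amalgamation, join in `U k`, and
update the pending tasks. -/
def FData.step (D : FData C) (k : ℕ) (s : FSt C) : FSt C :=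
  ⟨D.JZ (D.AZ s.1 s.1 (s.2 k).1 (𝟙 s.1) (s.2 k).2) (D.U k),
   fun j =>
     if (Nat.unpair (j - 1)).1 = k + 1 then
       ⟨D.Fam (D.JZ (D.AZ s.1 s.1 (s.2 k).1 (𝟙 s.1) (s.2 k).2) (D.U k)) (Nat.unpair (j - 1)).2,
        D.ffam _ _⟩
     else
       ⟨D.AZ s.1 (D.JZ (D.AZ s.1 s.1 (s.2 k).1 (𝟙 s.1) (s.2 k).2) (D.U k)) (s.2 j).1
          (D.Ah s.1 s.1 (s.2 k).1 (𝟙 s.1) (s.2 k).2 ≫ D.j1 _ _) (s.2 j).2,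
        D.Ah s.1 (D.JZ (D.AZ s.1 s.1 (s.2 k).1 (𝟙 s.1) (s.2 k).2) (D.U k)) (s.2 j).1
          (D.Ah s.1 s.1 (s.2 k).1 (𝟙 s.1) (s.2 k).2 ≫ D.j1 _ _) (s.2 j).2⟩⟩

/-- The sequence of states. -/
def FData.seq (D : FData C) : ℕ → FSt C
  | 0 => ⟨D.U 0, fun j => ⟨D.Fam (D.U 0) (Nat.unpair (j - 1)).2, D.ffam _ _⟩⟩
  | k + 1 => D.step k (D.seq k)

/-- The resulting ind-object. -/
def FData.omega (D : FData C) : IndObject C where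
  obj n := (D.seq n).1
  map k := D.Ah (D.seq k).1 (D.seq k).1 ((D.seq k).2 k).1 (𝟙 _) ((D.seq k).2 k).2 ≫
    D.j1 _ (D.U k)

variable (D : FData C)

lemma embedU (k : ℕ) : Nonempty (D.U k ⟶ D.omega.obj (k + 1)) :=
  ⟨D.j2 _ (D.U k)⟩

lemma step_resolve (k : ℕ) : ∃ δ : ((D.seq k).2 k).1 ⟶ D.omega.obj (k + 1),
    ((D.seq k).2 k).2 ≫ δ = D.omega.map k := by
  refine ⟨D.Ai (D.seq k).1 (D.seq k).1 ((D.seq k).2 k).1 (𝟙 _) ((D.seq k).2 k).2 ≫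
    D.j1 _ (D.U k), ?_⟩
  have h := D.hA (D.seq k).1 (D.seq k).1 ((D.seq k).2 k).1 (𝟙 _) ((D.seq k).2 k).2
  show ((D.seq k).2 k).2 ≫ _ ≫ _ = _ ≫ _
  erw [← Category.assoc, ← h, Category.id_comp]

lemma seq_task_eq (n m : ℕ) :
    (D.seq n).2 (Nat.pair n m + 1) = ⟨D.Fam (D.seq n).1 m, D.ffam (D.seq n).1 m⟩ := by
  cases n with
  | zero =>
    have h : Nat.unpair (Nat.pair 0 m + 1 - 1) = (0, m) := by simp
    simp only [FData.seq]
    rw [h]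
  | succ k =>
    have h : Nat.unpair (Nat.pair (k + 1) m + 1 - 1) = (k + 1, m) := by simp
    simp only [FData.seq, FData.step]
    rw [h, if_pos rfl]

lemma step_update (k j : ℕ) (hj : (Nat.unpair (j - 1)).1 ≠ k + 1) :
    ∃ χ : ((D.seq k).2 j).1 ⟶ ((D.seq (k + 1)).2 j).1,
      ((D.seq k).2 j).2 ≫ χ = D.omega.map k ≫ ((D.seq (k + 1)).2 j).2 := by
  have hif : (D.seq (k + 1)).2 j =
      ⟨D.AZ (D.seq k).1 (D.omega.obj (k + 1)) ((D.seq k).2 j).1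
        (D.omega.map k) ((D.seq k).2 j).2,
       D.Ah (D.seq k).1 (D.omega.obj (k + 1)) ((D.seq k).2 j).1
        (D.omega.map k) ((D.seq k).2 j).2⟩ := by
    show (if (Nat.unpair (j - 1)).1 = k + 1 then _ else _) = _
    exact if_neg hj
  rw [hif]
  exact ⟨D.Ai _ _ _ (D.omega.map k) ((D.seq k).2 j).2,
    (D.hA _ _ _ (D.omega.map k) ((D.seq k).2 j).2).symm⟩

lemma inv (n m : ℕ) : ∀ (k : ℕ) (h : n ≤ k),
    ∃ δ : D.Fam (D.omega.obj n) m ⟶ ((D.seq k).2 (Nat.pair n m + 1)).1,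
      D.ffam (D.omega.obj n) m ≫ δ =
        D.omega.trans h ≫ ((D.seq k).2 (Nat.pair n m + 1)).2 := by
  intro k h
  induction k, h using Nat.le_induction with
  | base =>
    rw [seq_task_eq]
    refine ⟨𝟙 _, ?_⟩
    rw [trans_refl]
    exact (Category.comp_id _).trans (Category.id_comp _).symm
  | succ k hk ih =>
    obtain ⟨δ, hδ⟩ := ih
    have hne : (Nat.unpair (Nat.pair n m + 1 - 1)).1 ≠ k + 1 := by
      simp only [Nat.add_sub_cancel, Nat.unpair_pair]
      omega
    obtain ⟨χ, hχ⟩ := step_update D k (Nat.pair n m + 1) hne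
    refine ⟨δ ≫ χ, ?_⟩
    erw [← Category.assoc, hδ, Category.assoc, hχ, ← Category.assoc,
      ← trans_succ D.omega hk]

lemma resolve (n m : ℕ) :
    ∃ (k : ℕ) (h : n ≤ k) (δ : D.Fam (D.omega.obj n) m ⟶ D.omega.obj k),
      D.ffam (D.omega.obj n) m ≫ δ = D.omega.trans h := by
  have hns : n ≤ Nat.pair n m + 1 := (Nat.left_le_pair n m).trans (Nat.le_succ _)
  obtain ⟨δ, hδ⟩ := inv D n m (Nat.pair n m + 1) hns
  obtain ⟨δ₂, hδ₂⟩ := step_resolve D (Nat.pair n m + 1)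
  refine ⟨Nat.pair n m + 2, hns.trans (Nat.le_succ _), δ ≫ δ₂, ?_⟩
  erw [← Category.assoc, hδ, Category.assoc, hδ₂,
    ← trans_succ D.omega hns]

end FraisseAux

open FraisseAux in
/-- categorical Fraïssé theorem: a category with all morphisms monic
satisfying countable cofinality, relative countable cofinality, the joint embedding
property and the amalgamation property has an ind-object that is both universal and
f-injective (hence universal and homogeneous). -/
theorem stmt_16 (C : Type u) [Category.{v} C]
    (hmono : ∀ {X Y : C} (f : X ⟶ Y), Mono f)
    (hCC : ∃ X : ℕ → C, ∀ Y : C, ∃ n : ℕ, Nonempty (Y ⟶ X n))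
    (hRCC : ∀ X : C, ∃ (Y : ℕ → C) (f : ∀ m : ℕ, X ⟶ Y m),
      ∀ (Z : C) (β : X ⟶ Z), ∃ (m : ℕ) (γ : Z ⟶ Y m), β ≫ γ = f m)
    (hJEP : ∀ X Y : C, ∃ Z : C, Nonempty (X ⟶ Z) ∧ Nonempty (Y ⟶ Z))
    (hAP : ∀ ⦃W X Y : C⦄ (f : W ⟶ X) (g : W ⟶ Y),
      ∃ (Z : C) (h : X ⟶ Z) (i : Y ⟶ Z), f ≫ h = g ≫ i) :
    ∃ Ω : IndObject C, Ω.Universal ∧ Ω.FInjective := by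
  classical
  obtain ⟨U, hU⟩ := hCC
  choose nU hnU using hU
  choose Fam ffam hfam using hRCC
  have hAP' : ∀ (W X Y : C) (f : W ⟶ X) (g : W ⟶ Y),
      ∃ (Z : C) (h : X ⟶ Z) (i : Y ⟶ Z), f ≫ h = g ≫ i := fun _ _ _ f g => hAP f g
  choose AZ Ah Ai hAeq using hAP'
  choose JZ hJ using hJEP
  set D : FData C :=
    ⟨U, Fam, ffam, AZ, Ah, Ai, hAeq, JZ,
      fun X Y => (hJ X Y).1.some, fun X Y => (hJ X Y).2.some⟩ with hD
  refine ⟨D.omega, ?_, ?_⟩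
  · intro X
    exact ⟨nU X + 1, ⟨(hnU X).some ≫ (embedU D (nU X)).some⟩⟩
  · intro X Y α n γ
    obtain ⟨Z, h, i, hhi⟩ : ∃ (Z : C) (h : Y ⟶ Z) (i : D.omega.obj n ⟶ Z), α ≫ h = γ ≫ i :=
      ⟨AZ X Y (D.omega.obj n) α γ, Ah X Y _ α γ, Ai X Y _ α γ, hAeq X Y _ α γ⟩
    obtain ⟨m, γ', hγ'⟩ := hfam (D.omega.obj n) Z i
    obtain ⟨k, hk, δ, hδ⟩ := resolve D n m
    have hγ'' : i ≫ γ' = D.ffam (D.omega.obj n) m := hγ'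
    refine ⟨k, hk, h ≫ γ' ≫ δ, ?_⟩
    rw [← Category.assoc, hhi, Category.assoc, ← Category.assoc i, hγ'',
      ← Category.assoc, Category.assoc, hδ]
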